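/- There exists a collection 𝒞 (over a countable universe) that is uniformly generatable without noise but is not non-uniformly generatable with noise level 1 (hence not uniformly generatable with noise level 1). -/

import Mathlib

open Set Classical

/-- The set of languages in `𝒞` consistent with sample `S` at noise level `i`. -/
def Consistent {U : Type*} (𝒞 : Set (Set U)) (S : Set U) (i : ℕ) : Set (Set U) :=
  {L | L ∈ 𝒞 ∧ (S \ L).encard ≤ (i : ℕ∞)}

/-- The noisy closure of `S` at noise level `i`. -/
noncomputable def NoisyClosure {U : Type*} (𝒞 : Set (Set U)) (S : Set U) (i : ℕ) : Set U :=
  if (Consistent 𝒞 S i).Nonempty then ⋂ L ∈ Consistent 𝒞 S i, L else ∅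

/-- The noisy closure dimension of `𝒞` at noise level `i`, as an extended natural. -/
noncomputable def NC {U : Type*} (𝒞 : Set (Set U)) (i : ℕ) : ℕ∞ :=
  ⨆ S ∈ {S : Set U | S.Finite ∧ (Consistent 𝒞 S i).Nonempty ∧
      (NoisyClosure 𝒞 S i).Finite}, S.encard

/-- `x` is an enumeration of `K` with noise level at most `i`. -/
def IsNoisyEnum {U : Type*} (K : Set U) (i : ℕ) (x : ℕ → U) : Prop :=
  Function.Injective x ∧ K ⊆ Set.range x ∧ (Set.range x \ K).encard ≤ (i : ℕ∞)

/-- The set of strings revealed up to and including time `t`. -/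
def seenSet {U : Type*} (x : ℕ → U) (t : ℕ) : Set U := x '' Set.Iic t

/-- The prefix `x₀, …, x_t` of the enumeration, as a list fed to the generator. -/
def prefixList {U : Type*} (x : ℕ → U) (t : ℕ) : List U := (List.range (t + 1)).map x

/-- `G` uniformly generates with noise level `i` for `𝒞`. -/
def UniformGen {U : Type*} (𝒞 : Set (Set U)) (i : ℕ) (G : List U → U) : Prop :=
  ∃ t0 : ℕ, ∀ K ∈ 𝒞, ∀ x : ℕ → U, IsNoisyEnum K i x →
    ∀ t ≥ t0, G (prefixList x t) ∈ K \ seenSet x t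

/-- `G` non-uniformly generates with noise level `i` for `𝒞`. -/
def NonUniformGen {U : Type*} (𝒞 : Set (Set U)) (i : ℕ) (G : List U → U) : Prop :=
  ∀ K ∈ 𝒞, ∃ t0 : ℕ, ∀ x : ℕ → U, IsNoisyEnum K i x →
    ∀ t ≥ t0, G (prefixList x t) ∈ K \ seenSet x t

/-- `G` uniformly noise-dependently generates for `𝒞`. -/
def UniformNoiseDepGen {U : Type*} (𝒞 : Set (Set U)) (G : List U → U) : Prop :=
  ∀ n : ℕ, ∃ t0 : ℕ, ∀ K ∈ 𝒞, ∀ x : ℕ → U, IsNoisyEnum K n x →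
    ∀ t ≥ t0, G (prefixList x t) ∈ K \ seenSet x t

/-- `G` non-uniformly noise-dependently generates for `𝒞`. -/
def NonUniformNoiseDepGen {U : Type*} (𝒞 : Set (Set U)) (G : List U → U) : Prop :=
  ∀ n : ℕ, ∀ K ∈ 𝒞, ∃ t0 : ℕ, ∀ x : ℕ → U, IsNoisyEnum K n x →
    ∀ t ≥ t0, G (prefixList x t) ∈ K \ seenSet x t

/-- The infinite "column" `B c` in the universe `ℕ × ℕ`. -/
def column (c : ℕ) : Set (ℕ × ℕ) := {p | p.1 = c}

/-- The collection of all nonempty unions of columns. -/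
def columnCollection : Set (Set (ℕ × ℕ)) :=
  {L | ∃ x : Set ℕ, x.Nonempty ∧ L = ⋃ c ∈ x, column c}

/-! ### Auxiliary definitions and lemmas -/

/-- The union of the columns indexed by `X`, described pointwise. -/
def Kof (X : Set ℕ) : Set (ℕ × ℕ) := {p | p.1 ∈ X}

lemma kof_mem (X : Set ℕ) (hX : X.Nonempty) : Kof X ∈ columnCollection := by
  refine ⟨X, hX, ?_⟩
  ext p
  simp [column, Kof]

lemma mem_colC {L : Set (ℕ × ℕ)} (h : L ∈ columnCollection) :
    ∃ X : Set ℕ, X.Nonempty ∧ L = Kof X := by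
  obtain ⟨X, hX, rfl⟩ := h
  exact ⟨X, hX, by ext p; simp [column, Kof]⟩

lemma kof_infinite {X : Set ℕ} (hX : X.Nonempty) : (Kof X).Infinite := by
  obtain ⟨c, hc⟩ := hX
  exact Set.infinite_of_injective_forall_mem
    (f := fun n : ℕ => ((c, n) : ℕ × ℕ))
    (fun a b hab => by simpa using congrArg Prod.snd hab)
    (fun n => hc)

lemma le_foldr_max (l : List ℕ) (a : ℕ) (h : a ∈ l) : a ≤ l.foldr max 0 := by
  induction l with
  | nil => simp at h
  | cons b l ih =>
    rcases List.mem_cons.mp h with rfl | h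
    · exact le_max_left _ _
    · exact le_trans (ih h) (le_max_right _ _)

lemma mem_prefixList {U : Type*} {x : ℕ → U} {t : ℕ} {a : U} :
    a ∈ prefixList x t ↔ ∃ s ≤ t, x s = a := by
  simp [prefixList, Nat.lt_succ_iff]

lemma mem_seenSet {U : Type*} {x : ℕ → U} {t : ℕ} {a : U} :
    a ∈ seenSet x t ↔ ∃ s ≤ t, x s = a := by
  simp [seenSet]

lemma headI_prefixList (x : ℕ → ℕ × ℕ) (t : ℕ) : (prefixList x t).headI = x 0 := by
  simp [prefixList, List.range_succ_eq_map]

/-- From any `b : ℕ → ℕ` we can extract an infinite set `S` such that every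
fiber of `b` over a point of `S` meets `S` in at most one point. -/
lemma exists_good_S (b : ℕ → ℕ) :
    ∃ S : Set ℕ, S.Infinite ∧
      ∀ j1 ∈ S, ∀ j2 ∈ S, b j1 = b j2 → b j1 ∈ S → j1 = j2 := by
  by_cases hfib : ∃ m, {j | b j = m}.Infinite
  · obtain ⟨m, hm⟩ := hfib
    refine ⟨{j | b j = m} \ {m}, hm.diff (Set.finite_singleton m), ?_⟩
    rintro j1 ⟨hj1, _⟩ j2 ⟨hj2, _⟩ heq hbin
    exfalso
    have h1 : b j1 = m := hj1
    exact hbin.2 (by simp [h1])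
  · push_neg at hfib
    have hrange : (Set.range b).Infinite := by
      intro hfin
      have hsub : (Set.univ : Set ℕ) ⊆ ⋃ m ∈ Set.range b, {j | b j = m} := by
        intro j _
        exact Set.mem_biUnion ⟨j, rfl⟩ rfl
      exact Set.infinite_univ
        (Set.Finite.subset (Set.Finite.biUnion hfin (fun m _ => hfib m)) hsub)
    set F : ℕ → ℕ := fun m => sInf {j | b j = m} with hF
    have hbF : ∀ m ∈ Set.range b, b (F m) = m := by
      rintro m ⟨j, rfl⟩
      exact Nat.sInf_mem (⟨j, rfl⟩ : {j' | b j' = b j}.Nonempty)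
    have hinj : Set.InjOn F (Set.range b) := by
      intro m1 h1 m2 h2 he
      rw [← hbF m1 h1, ← hbF m2 h2, he]
    refine ⟨F '' Set.range b, hrange.image hinj, ?_⟩
    rintro j1 ⟨m1, hm1, rfl⟩ j2 ⟨m2, hm2, rfl⟩ heq _
    rw [hbF m1 hm1, hbF m2 hm2] at heq
    rw [heq]

/-- Construction of a noise-1 enumeration of `K` beginning with the whole block
`[(2^k,0), (2^k+1,0), …, (2^(k+1)-1,0)]`, assuming at most one of these points
is outside `K`. -/
lemma exists_enum (K : Set (ℕ × ℕ)) (hKinf : K.Infinite) (k : ℕ)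
    (hnoise : ∀ c1 c2 : ℕ, 2^k ≤ c1 → c1 < 2^(k+1) → (c1,(0:ℕ)) ∉ K →
      2^k ≤ c2 → c2 < 2^(k+1) → (c2,(0:ℕ)) ∉ K → c1 = c2) :
    ∃ x : ℕ → ℕ × ℕ, IsNoisyEnum K 1 x ∧
      prefixList x (2^k - 1) = (List.range (2^k)).map (fun n => (2^k + n, 0)) := by
  have h2 : 2^(k+1) = 2^k + 2^k := by rw [pow_succ]; ring
  rw [h2] at hnoise
  set M := 2^k with hM
  have hpos : 0 < M := pow_pos (by norm_num) k
  set Pset : Set (ℕ × ℕ) := (fun c => ((c, 0) : ℕ × ℕ)) '' (Set.Ico M (M + M)) with hPset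
  have hPfin : Pset.Finite := (Set.finite_Ico _ _).image _
  set D : Set (ℕ × ℕ) := K \ Pset with hD
  have hDinf : D.Infinite := hKinf.diff hPfin
  have hDc : D.Countable := Set.to_countable _
  haveI : Countable ↥D := hDc.to_subtype
  haveI : Infinite ↥D := hDinf.to_subtype
  obtain ⟨dd⟩ := nonempty_denumerable ↥D
  letI := dd
  set e : ↥D ≃ ℕ := Denumerable.eqv ↥D with he
  set f : ℕ → ℕ × ℕ := fun n => (e.symm n : ↥D).val with hf
  have hfD : ∀ n, f n ∈ D := fun n => (e.symm n).2
  have hfInj : Function.Injective f :=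
    Subtype.val_injective.comp e.symm.injective
  have hfSurj : ∀ a ∈ D, ∃ n, f n = a := by
    intro a ha
    exact ⟨e ⟨a, ha⟩, by simp [hf]⟩
  set x : ℕ → ℕ × ℕ := fun n => if n < M then (M + n, 0) else f (n - M) with hx
  have hxlt : ∀ n < M, x n = (M + n, 0) := fun n hn => if_pos hn
  have hmemP : ∀ n < M, ((M + n, 0) : ℕ × ℕ) ∈ Pset :=
    fun n hn => ⟨M + n, ⟨Nat.le_add_right _ _, by omega⟩, rfl⟩
  have hxge : ∀ n, ¬ n < M → x n = f (n - M) := fun n hn => if_neg hn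
  have hinj : Function.Injective x := by
    intro n1 n2 hne
    by_cases h1 : n1 < M <;> by_cases hh2 : n2 < M
    · rw [hxlt n1 h1, hxlt n2 hh2] at hne
      have := congrArg Prod.fst hne
      simpa using this
    · exfalso
      rw [hxlt n1 h1, hxge n2 hh2] at hne
      exact (hfD (n2 - M)).2 (hne ▸ hmemP n1 h1)
    · exfalso
      rw [hxge n1 h1, hxlt n2 hh2] at hne
      exact (hfD (n1 - M)).2 (hne ▸ hmemP n2 hh2)
    · rw [hxge n1 h1, hxge n2 hh2] at hne
      have := hfInj hne
      omega
  refine ⟨x, ⟨hinj, ?_, ?_⟩, ?_⟩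
  · -- K ⊆ range x
    intro a ha
    by_cases hP : a ∈ Pset
    · obtain ⟨c, hc, rfl⟩ := hP
      obtain ⟨hc1, hc2⟩ := hc
      refine ⟨c - M, ?_⟩
      rw [hxlt _ (by omega : c - M < M)]
      have : M + (c - M) = c := by omega
      rw [this]
    · obtain ⟨n, hn⟩ := hfSurj a ⟨ha, hP⟩
      refine ⟨n + M, ?_⟩
      rw [hxge _ (by omega)]
      simpa using hn
  · -- noise bound
    have hsub : Set.range x \ K ⊆ Pset \ K := by
      rintro p ⟨⟨n, rfl⟩, hpK⟩
      by_cases hn : n < M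
      · exact ⟨(hxlt n hn) ▸ hmemP n hn, hpK⟩
      · exact absurd ((hxge n hn) ▸ (hfD (n - M)).1) hpK
    refine le_trans (Set.encard_mono hsub) ?_
    rw [Nat.cast_one, Set.encard_le_one_iff]
    rintro p q ⟨⟨c1, hc1, rfl⟩, hp⟩ ⟨⟨c2, hc2, rfl⟩, hq⟩
    have := hnoise c1 c2 hc1.1 hc1.2 hp hc2.1 hc2.2 hq
    rw [this]
  · -- prefix
    unfold prefixList
    have ht1 : M - 1 + 1 = M := by omega
    rw [ht1]
    apply List.map_congr_left
    intro n hn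
    exact hxlt n (List.mem_range.mp hn)

/-- No generator non-uniformly generates `columnCollection` with noise level 1. -/
lemma no_nonuniform (G : List (ℕ × ℕ) → ℕ × ℕ) :
    ¬ NonUniformGen columnCollection 1 G := by
  intro hG
  -- the canonical block prefixes and the generator's answers on them
  set Pk : ℕ → List (ℕ × ℕ) :=
    fun k => (List.range (2^k)).map (fun n => (2^k + n, 0)) with hPk
  set v : ℕ → ℕ := fun k => (G (Pk k)).1 with hv
  set b : ℕ → ℕ := fun k => Nat.log 2 (v k) with hb
  obtain ⟨S, hSinf, hSgood⟩ := exists_good_S b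
  set V : Set ℕ := {c | ∃ j ∈ S, v j = c} with hV
  set X : Set ℕ := {c | (∃ k ∈ S, 2^k ≤ c ∧ c < 2^(k+1)) ∧ c ∉ V} with hX
  have hblk : ∀ j k, 2^k ≤ v j → v j < 2^(k+1) → b j = k := by
    intro j k h1 h2
    exact Nat.log_eq_of_pow_le_of_lt_pow h1 h2
  -- in each block indexed by `S`, at most one "forbidden" value occurs
  have huniq : ∀ k ∈ S, ∀ c1 c2 : ℕ, 2^k ≤ c1 → c1 < 2^(k+1) → c1 ∈ V →
      2^k ≤ c2 → c2 < 2^(k+1) → c2 ∈ V → c1 = c2 := by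
    rintro k hkS c1 c2 hc11 hc12 ⟨j1, hj1, rfl⟩ hc21 hc22 ⟨j2, hj2, rfl⟩
    have hb1 : b j1 = k := hblk j1 k hc11 hc12
    have hb2 : b j2 = k := hblk j2 k hc21 hc22
    have := hSgood j1 hj1 j2 hj2 (by rw [hb1, hb2]) (by rw [hb1]; exact hkS)
    rw [this]
  have hXne : X.Nonempty := by
    obtain ⟨k, hkS, hk1⟩ := hSinf.exists_gt 0
    have h2 : 2^(k+1) = 2^k + 2^k := by rw [pow_succ]; ring
    have hk2 : 2 ≤ 2^k := by
      calc 2 = 2^1 := by norm_num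
      _ ≤ 2^k := Nat.pow_le_pow_right (by norm_num) hk1
    by_cases hmem : (2^k : ℕ) ∈ V
    · refine ⟨2^k + 1, ⟨k, hkS, by omega, by omega⟩, ?_⟩
      intro hmem2
      have := huniq k hkS (2^k) (2^k + 1) le_rfl (by omega) hmem
        (by omega) (by omega) hmem2
      omega
    · exact ⟨2^k, ⟨k, hkS, le_rfl, by omega⟩, hmem⟩
  obtain ⟨t0, ht0⟩ := hG (Kof X) (kof_mem X hXne)
  obtain ⟨k, hkS, hkgt⟩ := hSinf.exists_gt t0
  have hknoise : ∀ c1 c2 : ℕ, 2^k ≤ c1 → c1 < 2^(k+1) → (c1,(0:ℕ)) ∉ Kof X →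
      2^k ≤ c2 → c2 < 2^(k+1) → (c2,(0:ℕ)) ∉ Kof X → c1 = c2 := by
    intro c1 c2 h11 h12 h13 h21 h22 h23
    have hV1 : c1 ∈ V := by
      by_contra hc
      exact h13 ⟨⟨k, hkS, h11, h12⟩, hc⟩
    have hV2 : c2 ∈ V := by
      by_contra hc
      exact h23 ⟨⟨k, hkS, h21, h22⟩, hc⟩
    exact huniq k hkS c1 c2 h11 h12 hV1 h21 h22 hV2
  obtain ⟨x, hxe, hxpre⟩ := exists_enum (Kof X) (kof_infinite hXne) k hknoise
  have hklt : k < 2^k := Nat.lt_two_pow_self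
  have hres := ht0 x hxe (2^k - 1) (by omega)
  rw [hxpre] at hres
  have hmemK : G (Pk k) ∈ Kof X := hres.1
  have hvX : v k ∈ X := hmemK
  exact hvX.2 ⟨k, hkS, rfl⟩

theorem stmt16 :
    ∃ 𝒞 : Set (Set (ℕ × ℕ)), (∀ L ∈ 𝒞, L.Infinite) ∧
      (∃ G : List (ℕ × ℕ) → ℕ × ℕ, UniformGen 𝒞 0 G) ∧
      ¬ (∃ G : List (ℕ × ℕ) → ℕ × ℕ, NonUniformGen 𝒞 1 G) ∧
      ¬ (∃ G : List (ℕ × ℕ) → ℕ × ℕ, UniformGen 𝒞 1 G) := by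
  refine ⟨columnCollection, ?_, ?_, ?_, ?_⟩
  · -- all languages are infinite
    intro L hL
    obtain ⟨X, hXne, rfl⟩ := mem_colC hL
    exact kof_infinite hXne
  · -- uniform noiseless generation
    refine ⟨fun l => (l.headI.1, (l.map Prod.snd).foldr max 0 + 1), 0, ?_⟩
    intro K hK x hx t _
    obtain ⟨X, hXne, rfl⟩ := mem_colC hK
    obtain ⟨hinj, hsub, hn⟩ := hx
    have hrange : Set.range x ⊆ Kof X := by
      rw [← Set.diff_eq_empty]
      rw [← Set.encard_eq_zero]
      exact le_antisymm (by simpa using hn) (zero_le)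
    have h0 : x 0 ∈ Kof X := hrange ⟨0, rfl⟩
    constructor
    · show ((prefixList x t).headI.1, _) ∈ Kof X
      rw [headI_prefixList]
      exact h0
    · intro hseen
      obtain ⟨s, hs, hxs⟩ := mem_seenSet.mp hseen
      have h2 : (x s).2 = ((prefixList x t).map Prod.snd).foldr max 0 + 1 :=
        congrArg Prod.snd hxs
      have hmem : (x s).2 ∈ (prefixList x t).map Prod.snd :=
        List.mem_map_of_mem (f := Prod.snd) (mem_prefixList.mpr ⟨s, hs, rfl⟩)
      have := le_foldr_max _ _ hmem
      omega
  · -- no non-uniform noise-1 generation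
    rintro ⟨G, hG⟩
    exact no_nonuniform G hG
  · -- no uniform noise-1 generation
    rintro ⟨G, t0, hG⟩
    exact no_nonuniform G (fun K hK => ⟨t0, fun x hx t ht => hG K hK x hx t ht⟩)
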